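/- Let e_k = exp(iπ Σ_{j=0}^{s} 2^{-p_j}) for k ≥ 1 with binary expansion k = 2^{p_0} + ⋯ + 2^{p_s} (0 ≤ p_0 < ⋯ < p_s), and e_0 = 1. Then for every n ≥ 0, the set {e_0, e_1, …, e_{2^n - 1}} equals the set of all 2^n-th roots of unity. -/

import Mathlib

/-- `lejaSum k = Σ_j 2^{-p_j}` where `k = Σ_j 2^{p_j}` is the binary expansion of `k`. -/
noncomputable def lejaSum (k : ℕ) : ℝ :=
  ∑ p ∈ Finset.range (k + 1), if Nat.testBit k p then ((2 : ℝ) ^ p)⁻¹ else 0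

/-- The natural Leja sequence of the unit disk: `e k = exp(iπ Σ_j 2^{-p_j})`. -/
noncomputable def lejaPt (k : ℕ) : ℂ :=
  Complex.exp (Real.pi * Complex.I * (lejaSum k : ℝ))

lemma lejaSum_eq (k m : ℕ) (h : k + 1 ≤ m) :
    lejaSum k = ∑ p ∈ Finset.range m, if Nat.testBit k p then ((2 : ℝ) ^ p)⁻¹ else 0 := by
  unfold lejaSum
  apply Finset.sum_subset (Finset.range_subset_range.mpr h)
  intro p hp hp'
  simp only [Finset.mem_range, not_lt] at hp'
  have : Nat.testBit k p = false :=
    Nat.testBit_eq_false_of_lt (lt_of_lt_of_le (Nat.lt_two_pow_self (n := k))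
      (Nat.pow_le_pow_right (by norm_num) (le_trans (Nat.le_succ k) hp')))
  simp [this]

lemma lejaSum_zero : lejaSum 0 = 0 := by simp [lejaSum]

lemma lejaSum_two_mul (k : ℕ) : lejaSum (2 * k) = lejaSum k / 2 := by
  rcases Nat.eq_zero_or_pos k with rfl | hk
  · simp [lejaSum_zero]
  have h0 : Nat.testBit (2 * k) 0 = false := by
    simp [Nat.testBit_zero]
  have hs : ∀ p, Nat.testBit (2 * k) (p + 1) = Nat.testBit k p := by
    intro p; rw [Nat.testBit_succ]; congr 1; omega
  rw [show lejaSum (2 * k) = ∑ p ∈ Finset.range (2 * k + 1),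
        if Nat.testBit (2 * k) p then ((2 : ℝ) ^ p)⁻¹ else 0 from rfl,
    Finset.sum_range_succ', h0]
  simp only [hs, Bool.false_eq_true, if_false, add_zero]
  rw [lejaSum_eq k (2 * k) (by omega), Finset.sum_div]
  apply Finset.sum_congr rfl
  intro p _
  split
  · rw [pow_succ]; ring
  · simp

lemma lejaSum_two_mul_add_one (k : ℕ) : lejaSum (2 * k + 1) = 1 + lejaSum (2 * k) := by
  rw [lejaSum_two_mul]
  have h0 : Nat.testBit (2 * k + 1) 0 = true := by
    simp [Nat.testBit_zero]
  have hs : ∀ p, Nat.testBit (2 * k + 1) (p + 1) = Nat.testBit k p := by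
    intro p; rw [Nat.testBit_succ]; congr 1; omega
  rw [show lejaSum (2 * k + 1) = ∑ p ∈ Finset.range (2 * k + 1 + 1),
        if Nat.testBit (2 * k + 1) p then ((2 : ℝ) ^ p)⁻¹ else 0 from rfl,
    Finset.sum_range_succ', h0]
  simp only [hs, if_true, pow_zero, inv_one]
  rw [add_comm]
  congr 1
  rw [lejaSum_eq k (2 * k + 1) (by omega), Finset.sum_div]
  apply Finset.sum_congr rfl
  intro p _
  split
  · rw [pow_succ]; ring
  · simp

lemma lejaPt_zero : lejaPt 0 = 1 := by
  simp [lejaPt, lejaSum_zero]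

lemma lejaPt_two_mul_sq (k : ℕ) : lejaPt (2 * k) ^ 2 = lejaPt k := by
  rw [lejaPt, lejaPt, ← Complex.exp_nat_mul, lejaSum_two_mul]
  congr 1
  push_cast
  ring

lemma lejaPt_two_mul_add_one (k : ℕ) : lejaPt (2 * k + 1) = - lejaPt (2 * k) := by
  rw [lejaPt, lejaPt, lejaSum_two_mul_add_one]
  push_cast
  rw [mul_add, Complex.exp_add]
  rw [show (Real.pi : ℂ) * Complex.I * 1 = Real.pi * Complex.I by ring, Complex.exp_pi_mul_I]
  ring

theorem stmt19 (n : ℕ) :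
    (lejaPt '' {k : ℕ | k < 2 ^ n}) = {z : ℂ | z ^ (2 ^ n) = 1} := by
  induction n with
  | zero =>
    ext z
    simp only [pow_zero, pow_one, Set.mem_image, Set.mem_setOf_eq]
    constructor
    · rintro ⟨k, hk, rfl⟩
      have : k = 0 := by simpa using hk
      subst this
      exact lejaPt_zero
    · rintro rfl
      exact ⟨0, by norm_num, lejaPt_zero⟩
  | succ n ih =>
    have ih' : ∀ w : ℂ, w ^ 2 ^ n = 1 ↔ ∃ m < 2 ^ n, lejaPt m = w := by
      intro w
      have h := Set.ext_iff.mp ih w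
      simp only [Set.mem_image, Set.mem_setOf_eq] at h
      exact h.symm
    have hpow : (2 : ℕ) ^ (n + 1) = 2 * 2 ^ n := by ring
    ext z
    simp only [Set.mem_image, Set.mem_setOf_eq]
    constructor
    · rintro ⟨k, hk, rfl⟩
      rcases Nat.even_or_odd k with ⟨m, hm⟩ | ⟨m, hm⟩
      · subst hm
        rw [show m + m = 2 * m from by ring, hpow, pow_mul, lejaPt_two_mul_sq]
        exact (ih' _).mpr ⟨m, by omega, rfl⟩
      · subst hm
        rw [lejaPt_two_mul_add_one, hpow, pow_mul, neg_sq, lejaPt_two_mul_sq]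
        exact (ih' _).mpr ⟨m, by omega, rfl⟩
    · intro hz
      have h2 : (z ^ 2) ^ 2 ^ n = 1 := by
        rw [← pow_mul, ← hpow]; exact hz
      obtain ⟨m, hm, hzm⟩ := (ih' _).mp h2
      have hw : z ^ 2 = lejaPt (2 * m) ^ 2 := by
        rw [lejaPt_two_mul_sq]; exact hzm.symm
      have hfac : (z - lejaPt (2 * m)) * (z + lejaPt (2 * m)) = 0 := by
        linear_combination hw
      rcases mul_eq_zero.mp hfac with h | h
      · exact ⟨2 * m, by omega, by linear_combination -h⟩
      · exact ⟨2 * m + 1, by omega,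
          by rw [lejaPt_two_mul_add_one]; linear_combination -h⟩
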